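/- In a Radon plane, if a segment [pq] contained in the unit circle S satisfies ‖p − q‖ = 1, then S is an affine regular hexagon, namely the hexagon with vertices ±p, ±q, ±(p−q). -/

import Mathlib

open Module

variable {V : Type*} [NormedAddCommGroup V] [NormedSpace ℝ V]

noncomputable def sine {V : Type*} [NormedAddCommGroup V] [NormedSpace ℝ V] (x y : V) : ℝ :=
  ⨅ t : ℝ, ‖x + t • y‖

def BOrth {V : Type*} [NormedAddCommGroup V] [NormedSpace ℝ V] (x y : V) : Prop :=
  ∀ t : ℝ, ‖x‖ ≤ ‖x + t • y‖

noncomputable def cD (V : Type*) [NormedAddCommGroup V] [NormedSpace ℝ V] : ℝ :=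
  sInf {r : ℝ | ∃ x y : V, ‖x‖ = 1 ∧ ‖y‖ = 1 ∧ BOrth x y ∧ r = sine y x}

noncomputable def cR (V : Type*) [NormedAddCommGroup V] [NormedSpace ℝ V] : ℝ :=
  sSup {r : ℝ | ∃ x y : V, ‖x‖ = 1 ∧ ‖y‖ = 1 ∧ r = |sine x y - sine y x|}

theorem radon_segment_in_sphere_hexagon (hV : finrank ℝ V = 2)
    (hRadon : ∀ x y : V, BOrth x y → BOrth y x) (p q : V)
    (hseg : segment ℝ p q ⊆ {w : V | ‖w‖ = 1}) (hpq : ‖p - q‖ = 1) :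
    {w : V | ‖w‖ = 1} =
      frontier (convexHull ℝ ({p, -p, q, -q, p - q, q - p} : Set V)) := by
  have hp1 : ‖p‖ = 1 := hseg (left_mem_segment ℝ p q)
  have hq1 : ‖q‖ = 1 := hseg (right_mem_segment ℝ p q)
  -- triangle inequality helper
  have tri : ∀ (a b : ℝ) (x y : V), 0 ≤ a → 0 ≤ b →
      ‖a • x + b • y‖ ≤ a * ‖x‖ + b * ‖y‖ := by
    intro a b x y ha hb
    calc ‖a • x + b • y‖ ≤ ‖a • x‖ + ‖b • y‖ := norm_add_le _ _
    _ = a * ‖x‖ + b * ‖y‖ := by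
        rw [norm_smul, norm_smul, Real.norm_of_nonneg ha, Real.norm_of_nonneg hb]
  -- the line through p and q supports the unit ball
  have L : ∀ t : ℝ, 1 ≤ ‖q + t • (p - q)‖ := by
    intro t
    rcases lt_or_ge t 0 with ht | ht
    · -- q = (t/(t-1)) • p + (1/(1-t)) • (q + t • (p-q))
      by_contra hcon
      push_neg at hcon
      have ht1 : (0:ℝ) < 1 - t := by linarith
      have hne1 : (1:ℝ) - t ≠ 0 := by linarith
      have hne2 : t - 1 ≠ 0 := by linarith
      have hkey : q = (t/(t-1)) • p + (1/(1-t)) • (q + t • (p - q)) := by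
        match_scalars <;> field_simp <;> ring
      have h1 : 0 ≤ t/(t-1) := by
        rw [div_nonneg_iff]; right; constructor <;> linarith
      have h2 : (0:ℝ) < 1/(1-t) := by positivity
      have hsum : t/(t-1) + 1/(1-t) = 1 := by field_simp; ring
      have := tri (t/(t-1)) (1/(1-t)) p (q + t • (p - q)) h1 h2.le
      rw [← hkey, hq1, hp1] at this
      nlinarith
    rcases le_or_gt t 1 with ht1 | ht1
    · have hmem : q + t • (p - q) ∈ segment ℝ p q :=
        ⟨t, 1 - t, ht, by linarith, by ring, by module⟩
      exact (hseg hmem).ge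
    · -- p = ((t-1)/t) • q + (1/t) • (q + t • (p-q))
      by_contra hcon
      push_neg at hcon
      have ht0 : (0:ℝ) < t := by linarith
      have hne0 : t ≠ 0 := ne_of_gt ht0
      have hkey : p = ((t-1)/t) • q + (1/t) • (q + t • (p - q)) := by
        match_scalars <;> field_simp <;> ring
      have h1 : 0 ≤ (t-1)/t := div_nonneg (by linarith) ht0.le
      have h2 : (0:ℝ) < 1/t := by positivity
      have := tri ((t-1)/t) (1/t) q (q + t • (p - q)) h1 h2.le
      rw [← hkey, hq1, hp1] at this
      have hsum : (t-1)/t + 1/t = 1 := by field_simp; ring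
      nlinarith
  have hr1 : ‖p - q‖ = 1 := hpq
  -- Birkhoff orthogonality relations
  have hBqr : BOrth q (p - q) := fun t => by rw [hq1]; exact L t
  have hBpr : BOrth p (p - q) := by
    intro t
    have h : p + t • (p - q) = q + (1 + t) • (p - q) := by module
    rw [hp1, h]
    exact L (1 + t)
  have hBrq : BOrth (p - q) q := hRadon q (p - q) hBqr
  have hBrp : BOrth (p - q) p := hRadon p (p - q) hBpr
  -- coordinate bounds
  have hb1 : ∀ a b : ℝ, |a + b| ≤ ‖a • p + b • q‖ := by
    intro a b
    rcases eq_or_ne (a + b) 0 with h | h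
    · rw [h]; simpa using norm_nonneg _
    · have hkey : a • p + b • q = (a + b) • (q + (a/(a+b)) • (p - q)) := by
        match_scalars <;> field_simp <;> ring
      rw [hkey, norm_smul, Real.norm_eq_abs]
      nlinarith [L (a/(a+b)), abs_nonneg (a+b), abs_pos.2 h]
  have hb2 : ∀ a b : ℝ, |a| ≤ ‖a • p + b • q‖ := by
    intro a b
    rcases eq_or_ne a 0 with h | h
    · rw [h]; simpa using norm_nonneg _
    · have hkey : a • p + b • q = a • ((p - q) + ((a+b)/a) • q) := by
        match_scalars <;> field_simp <;> ring
      rw [hkey, norm_smul, Real.norm_eq_abs]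
      have := hBrq ((a+b)/a)
      rw [hr1] at this
      nlinarith [abs_nonneg a, abs_pos.2 h]
  have hb3 : ∀ a b : ℝ, |b| ≤ ‖a • p + b • q‖ := by
    intro a b
    rcases eq_or_ne b 0 with h | h
    · rw [h]; simpa using norm_nonneg _
    · have hkey : a • p + b • q = (-b) • ((p - q) + (-(a+b)/b) • p) := by
        match_scalars <;> field_simp <;> ring
      rw [hkey, norm_smul, Real.norm_eq_abs, abs_neg]
      have := hBrp (-(a+b)/b)
      rw [hr1] at this
      nlinarith [abs_nonneg b, abs_pos.2 h]
  -- p, q is a basis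
  have hli : LinearIndependent ℝ ![p, q] := by
    rw [LinearIndependent.pair_iff]
    intro s t hst
    have h1 := hb2 s t
    have h2 := hb3 s t
    rw [hst, norm_zero] at h1 h2
    constructor <;> [skip; skip] <;>
      (first
        | exact abs_eq_zero.1 (le_antisymm h1 (abs_nonneg _))
        | exact abs_eq_zero.1 (le_antisymm h2 (abs_nonneg _)))
  have hcard : Fintype.card (Fin 2) = finrank ℝ V := by simp [hV]
  have hrepr : ∀ x : V, ∃ a b : ℝ, x = a • p + b • q := by
    intro x
    have h := (basisOfLinearIndependentOfCardEqFinrank hli hcard).sum_repr x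
    rw [Fin.sum_univ_two, coe_basisOfLinearIndependentOfCardEqFinrank] at h
    exact ⟨((basisOfLinearIndependentOfCardEqFinrank hli hcard).repr x) 0,
      ((basisOfLinearIndependentOfCardEqFinrank hli hcard).repr x) 1, by simpa using h.symm⟩
  -- hexagon set and its hull
  have hpK : p ∈ convexHull ℝ ({p, -p, q, -q, p - q, q - p} : Set V) :=
    subset_convexHull ℝ _ (by simp)
  have hnpK : -p ∈ convexHull ℝ ({p, -p, q, -q, p - q, q - p} : Set V) :=
    subset_convexHull ℝ _ (by simp)
  have hqK : q ∈ convexHull ℝ ({p, -p, q, -q, p - q, q - p} : Set V) :=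
    subset_convexHull ℝ _ (by simp)
  have hnqK : -q ∈ convexHull ℝ ({p, -p, q, -q, p - q, q - p} : Set V) :=
    subset_convexHull ℝ _ (by simp)
  have hrK : p - q ∈ convexHull ℝ ({p, -p, q, -q, p - q, q - p} : Set V) :=
    subset_convexHull ℝ _ (by simp)
  have hnrK : q - p ∈ convexHull ℝ ({p, -p, q, -q, p - q, q - p} : Set V) :=
    subset_convexHull ℝ _ (by simp)
  have hconv := convex_convexHull ℝ ({p, -p, q, -q, p - q, q - p} : Set V)
  have h0K : (0:V) ∈ convexHull ℝ ({p, -p, q, -q, p - q, q - p} : Set V) := by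
    have := hconv hpK hnpK (by norm_num : (0:ℝ) ≤ 1/2) (by norm_num : (0:ℝ) ≤ 1/2)
      (by norm_num)
    have heq : (1/2 : ℝ) • p + (1/2 : ℝ) • (-p) = (0:V) := by module
    rwa [heq] at this
  have combo : ∀ u v : V, u ∈ convexHull ℝ ({p, -p, q, -q, p - q, q - p} : Set V) →
      v ∈ convexHull ℝ ({p, -p, q, -q, p - q, q - p} : Set V) →
      ∀ a b : ℝ, 0 ≤ a → 0 ≤ b → a + b ≤ 1 →
      a • u + b • v ∈ convexHull ℝ ({p, -p, q, -q, p - q, q - p} : Set V) := by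
    intro u v hu hv a b ha hb hab
    rcases eq_or_ne (a + b) 0 with h | h
    · have ha0 : a = 0 := by linarith
      have hb0 : b = 0 := by linarith
      rw [ha0, hb0]
      simpa using h0K
    · have hs : 0 < a + b := lt_of_le_of_ne (add_nonneg ha hb) (Ne.symm h)
      have hy := hconv hu hv (div_nonneg ha hs.le) (div_nonneg hb hs.le)
        (by field_simp)
      have hz := hconv hy h0K hs.le (by linarith : (0:ℝ) ≤ 1 - (a+b)) (by ring)
      have heq : (a+b) • ((a/(a+b)) • u + (b/(a+b)) • v) + (1-(a+b)) • (0:V)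
          = a • u + b • v := by
        match_scalars <;> field_simp
      rwa [heq] at hz
  -- the hull equals the closed unit ball
  have hKball : convexHull ℝ ({p, -p, q, -q, p - q, q - p} : Set V)
      = Metric.closedBall (0:V) 1 := by
    apply Set.Subset.antisymm
    · apply convexHull_min _ (convex_closedBall 0 1)
      intro x hx
      rw [Metric.mem_closedBall, dist_zero_right]
      simp only [Set.mem_insert_iff, Set.mem_singleton_iff] at hx
      rcases hx with h | h | h | h | h | h <;> rw [h] <;>
        (first
          | exact hp1.le
          | exact hq1.le
          | exact hr1.le
          | (rw [norm_neg]; first | exact hp1.le | exact hq1.le)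
          | (rw [← neg_sub p q, norm_neg]; exact hr1.le))
    · intro x hx
      rw [Metric.mem_closedBall, dist_zero_right] at hx
      obtain ⟨a, b, hab⟩ := hrepr x
      have h1 : |a| ≤ 1 := le_trans (by rw [hab] at hx; exact le_trans (hb2 a b) hx) le_rfl
      have h2 : |b| ≤ 1 := by rw [hab] at hx; exact le_trans (hb3 a b) hx
      have h3 : |a + b| ≤ 1 := by rw [hab] at hx; exact le_trans (hb1 a b) hx
      rw [hab]
      have h1' := abs_le.1 h1
      have h2' := abs_le.1 h2
      have h3' := abs_le.1 h3
      rcases le_or_gt 0 a with ha | ha <;> rcases le_or_gt 0 b with hb | hb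
      · exact combo p q hpK hqK a b ha hb (by linarith [h3'.2])
      · rcases le_or_gt 0 (a + b) with hab0 | hab0
        · have heq : a • p + b • q = (a+b) • p + (-b) • (p - q) := by module
          rw [heq]
          exact combo p (p - q) hpK hrK (a+b) (-b) hab0 (by linarith) (by linarith [h1'.2])
        · have heq : a • p + b • q = a • (p - q) + (-(a+b)) • (-q) := by module
          rw [heq]
          exact combo (p - q) (-q) hrK hnqK a (-(a+b)) ha (by linarith) (by linarith [h2'.1])
      · rcases le_or_gt 0 (a + b) with hab0 | hab0
        · have heq : a • p + b • q = (-a) • (q - p) + (a+b) • q := by module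
          rw [heq]
          exact combo (q - p) q hnrK hqK (-a) (a+b) (by linarith) hab0 (by linarith [h2'.2])
        · have heq : a • p + b • q = (-(a+b)) • (-p) + b • (q - p) := by module
          rw [heq]
          exact combo (-p) (q - p) hnpK hnrK (-(a+b)) b (by linarith) hb
            (by linarith [h1'.1])
      · have heq : a • p + b • q = (-a) • (-p) + (-b) • (-q) := by module
        rw [heq]
        exact combo (-p) (-q) hnpK hnqK (-a) (-b) (by linarith) (by linarith)
          (by linarith [h3'.1])
  -- conclude
  have hp0 : p ≠ 0 := by
    intro h
    rw [h, norm_zero] at hp1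
    exact one_ne_zero hp1.symm
  haveI : Nontrivial V := nontrivial_of_ne p 0 hp0
  have hsph : {w : V | ‖w‖ = 1} = Metric.sphere (0:V) 1 := by
    ext w
    simp [dist_zero_right]
  rw [hsph, hKball, frontier_closedBall 0 one_ne_zero]
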